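/- Let H be a real Hilbert space, A the generator of a contraction C₀-semigroup, B a bounded self-adjoint operator with B ≥ βI on a closed S(t)-invariant subspace F ⊆ (ker B)^⊥ (β > 0). Suppose x : [0,∞) → F is a continuously differentiable solution of ẋ = Ax − ⟨Bx,x⟩^{−μ}Bx (with the nonlinearity set to 0 when x = 0), 0 < μ < 1/2. Then ‖x(t)‖^{2μ} ≤ ‖x(0)‖^{2μ} − 2μβ^{1−μ}t whenever the right-hand side is nonnegative, and x(t) = 0 for all t ≥ ‖x(0)‖^{2μ}/(2μβ^{1−μ}). -/

import Mathlib

open RealInnerProductSpace Classical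

/-- Finite-time extinction for the bilinear closed loop
`ẋ = A x - ⟪B x, x⟫^(-μ) B x` on a closed subspace `F ⊆ (ker B)ᗮ` on which the
nonnegative self-adjoint operator `B` is coercive (`B ≥ β I`), with `A`
dissipative: `‖x(t)‖^(2μ) ≤ ‖x(0)‖^(2μ) - 2μ β^(1-μ) t` while the right-hand
side is nonnegative, and `x(t) = 0` for `t ≥ ‖x(0)‖^(2μ)/(2μ β^(1-μ))`. -/
theorem stmt_15 {H : Type*} [NormedAddCommGroup H] [InnerProductSpace ℝ H]
    (A : H →ₗ[ℝ] H) (hdiss : ∀ y : H, ⟪A y, y⟫ ≤ 0)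
    (B : H →L[ℝ] H)
    (hsa : ∀ y z : H, ⟪B y, z⟫ = ⟪y, B z⟫)
    (hpos : ∀ y : H, 0 ≤ ⟪B y, y⟫)
    (F : Submodule ℝ H) (hFclosed : IsClosed (F : Set H))
    (hFperp : F ≤ (LinearMap.ker (B : H →ₗ[ℝ] H))ᗮ)
    (β : ℝ) (hβ : 0 < β)
    (hcoer : ∀ y ∈ F, β * ‖y‖ ^ 2 ≤ ⟪B y, y⟫)
    (μ : ℝ) (hμ0 : 0 < μ) (hμ : μ < 1 / 2)
    (x : ℝ → H) (hxF : ∀ t : ℝ, 0 ≤ t → x t ∈ F)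
    (hx : ∀ t : ℝ, 0 ≤ t →
      HasDerivAt x
        (A (x t) -
          (if x t = 0 then (0 : ℝ) else ⟪B (x t), x t⟫ ^ (-μ)) • B (x t)) t) :
    (∀ t : ℝ, 0 ≤ t → 0 ≤ ‖x 0‖ ^ (2 * μ) - 2 * μ * β ^ (1 - μ) * t →
      ‖x t‖ ^ (2 * μ) ≤ ‖x 0‖ ^ (2 * μ) - 2 * μ * β ^ (1 - μ) * t) ∧
    (∀ t : ℝ, ‖x 0‖ ^ (2 * μ) / (2 * μ * β ^ (1 - μ)) ≤ t → x t = 0) := by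
  set K : ℝ := 2 * μ * β ^ (1 - μ) with hK
  have hβμ : (0:ℝ) < β ^ (1 - μ) := Real.rpow_pos_of_pos hβ _
  have hKpos : 0 < K := by positivity
  set V : ℝ → ℝ := fun s => ⟪x s, x s⟫ with hVdef
  -- derivative of V
  have hVderiv : ∀ u : ℝ, 0 ≤ u →
      HasDerivAt V (2 * ⟪A (x u) -
        (if x u = 0 then (0:ℝ) else ⟪B (x u), x u⟫ ^ (-μ)) • B (x u), x u⟫) u := by
    intro u hu
    have h := (hx u hu).inner ℝ (hx u hu)
    refine h.congr_deriv ?_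
    rw [real_inner_comm]
    ring
  -- the derivative is ≤ -2 β^(1-μ) (V u)^(1-μ)
  have hbound : ∀ u : ℝ, 0 ≤ u →
      2 * ⟪A (x u) -
        (if x u = 0 then (0:ℝ) else ⟪B (x u), x u⟫ ^ (-μ)) • B (x u), x u⟫
        ≤ -2 * β ^ (1 - μ) * (V u) ^ (1 - μ) := by
    intro u hu
    by_cases hz : x u = 0
    · simp [hz, hVdef, Real.zero_rpow (by linarith : (1:ℝ) - μ ≠ 0)]
    · simp only [if_neg hz]
      set b : ℝ := ⟪B (x u), x u⟫ with hb
      have hVu : 0 < V u := by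
        have h0 := norm_pos_iff.mpr hz
        simp only [hVdef, real_inner_self_eq_norm_sq]
        positivity
      have hbpos : 0 < b := by
        have h1 := hcoer (x u) (hxF u hu)
        have h2 : (0:ℝ) < β * ‖x u‖ ^ 2 := by
          have : (0:ℝ) < ‖x u‖ := norm_pos_iff.mpr hz
          positivity
        linarith
      have hinner : ⟪A (x u) - b ^ (-μ) • B (x u), x u⟫
          = ⟪A (x u), x u⟫ - b ^ (-μ) * b := by
        rw [inner_sub_left, real_inner_smul_left]
      have hbb : b ^ (-μ) * b = b ^ (1 - μ) := by
        nth_rewrite 2 [← Real.rpow_one b]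
        rw [← Real.rpow_add hbpos]
        ring_nf
      have hVb : β * V u ≤ b := by
        have h1 := hcoer (x u) (hxF u hu)
        have : V u = ‖x u‖ ^ 2 := by
          simp [hVdef, real_inner_self_eq_norm_sq]
        rw [this]; exact h1
      have hmon : (β * V u) ^ (1 - μ) ≤ b ^ (1 - μ) :=
        Real.rpow_le_rpow (by positivity) hVb (by linarith)
      have hsplit : (β * V u) ^ (1 - μ) = β ^ (1 - μ) * (V u) ^ (1 - μ) :=
        Real.mul_rpow (le_of_lt hβ) (le_of_lt hVu)
      have hA := hdiss (x u)
      rw [hinner, hbb]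
      nlinarith [hmon, hsplit]
  -- V is antitone on [0, ∞)
  have hVanti : ∀ s t : ℝ, 0 ≤ s → s ≤ t → V t ≤ V s := by
    intro s t hs hst
    have hanti : AntitoneOn V (Set.Ici (0:ℝ)) := by
      apply antitoneOn_of_deriv_nonpos (convex_Ici 0)
      · intro u hu
        exact ((hVderiv u hu).continuousAt).continuousWithinAt
      · intro u hu
        rw [interior_Ici] at hu
        exact ((hVderiv u (le_of_lt hu)).differentiableAt).differentiableWithinAt
      · intro u hu
        rw [interior_Ici] at hu
        rw [(hVderiv u (le_of_lt hu)).deriv]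
        have h := hbound u (le_of_lt hu)
        have hVnn : 0 ≤ V u := real_inner_self_nonneg
        have : (0:ℝ) ≤ (V u) ^ (1 - μ) := Real.rpow_nonneg hVnn _
        nlinarith
    exact hanti hs (le_trans hs hst) hst
  have hnormanti : ∀ s t : ℝ, 0 ≤ s → s ≤ t → ‖x t‖ ≤ ‖x s‖ := by
    intro s t hs hst
    have h := hVanti s t hs hst
    simp only [hVdef, real_inner_self_eq_norm_sq] at h
    nlinarith [norm_nonneg (x t), norm_nonneg (x s)]
  have hconv : ∀ y : H, ‖y‖ ^ (2 * μ) = ⟪y, y⟫ ^ μ := by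
    intro y
    rw [real_inner_self_eq_norm_sq, ← Real.rpow_natCast ‖y‖ 2, ← Real.rpow_mul (norm_nonneg y)]
    norm_num
  -- key estimate while the solution does not vanish
  have hkey : ∀ t : ℝ, 0 ≤ t → (∀ s : ℝ, 0 ≤ s → s ≤ t → x s ≠ 0) →
      ‖x t‖ ^ (2 * μ) + K * t ≤ ‖x 0‖ ^ (2 * μ) := by
    intro t ht hnz
    set g : ℝ → ℝ := fun s => (V s) ^ μ + K * s with hg
    have hgd : ∀ u ∈ Set.Icc (0:ℝ) t,
        HasDerivAt g ((2 * ⟪A (x u) -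
          (if x u = 0 then (0:ℝ) else ⟪B (x u), x u⟫ ^ (-μ)) • B (x u), x u⟫)
          * μ * (V u) ^ (μ - 1) + K) u := by
      intro u hu
      have hVne : V u ≠ 0 := by
        have h0 := norm_pos_iff.mpr (hnz u hu.1 hu.2)
        simp only [hVdef, real_inner_self_eq_norm_sq]
        positivity
      exact ((hVderiv u hu.1).rpow_const (Or.inl hVne)).add
        ((hasDerivAt_id u).const_mul K |>.congr_deriv (by ring))
    have hanti : AntitoneOn g (Set.Icc 0 t) := by
      apply antitoneOn_of_deriv_nonpos (convex_Icc 0 t)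
      · intro u hu
        exact ((hgd u hu).continuousAt).continuousWithinAt
      · intro u hu
        have hu' := interior_subset hu
        exact ((hgd u hu').differentiableAt).differentiableWithinAt
      · intro u hu
        have hu' := interior_subset hu
        rw [(hgd u hu').deriv]
        have hVu : 0 < V u := by
          have h0 := norm_pos_iff.mpr (hnz u hu'.1 hu'.2)
          simp only [hVdef, real_inner_self_eq_norm_sq]
          positivity
        have hb := hbound u hu'.1
        have hμ1 : (0:ℝ) < (V u) ^ (μ - 1) := Real.rpow_pos_of_pos hVu _
        have hmul : (V u) ^ (1 - μ) * (V u) ^ (μ - 1) = 1 := by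
          rw [← Real.rpow_add hVu]; norm_num
        have : (2 * ⟪A (x u) -
            (if x u = 0 then (0:ℝ) else ⟪B (x u), x u⟫ ^ (-μ)) • B (x u), x u⟫)
            * μ * (V u) ^ (μ - 1)
            ≤ (-2 * β ^ (1 - μ) * (V u) ^ (1 - μ)) * μ * (V u) ^ (μ - 1) := by
          have hc : 0 ≤ μ * (V u) ^ (μ - 1) := by positivity
          nlinarith
        calc _ ≤ (-2 * β ^ (1 - μ) * (V u) ^ (1 - μ)) * μ * (V u) ^ (μ - 1) + K := by
              linarith
          _ = -K * ((V u) ^ (1 - μ) * (V u) ^ (μ - 1)) + K := by rw [hK]; ring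
          _ = 0 := by rw [hmul]; ring
    have := hanti (Set.left_mem_Icc.mpr ht) (Set.right_mem_Icc.mpr ht) ht
    simp only [hg] at this
    rw [hconv (x t), hconv (x 0)]
    simp only [hVdef] at this ⊢
    linarith
  constructor
  · intro t ht hrhs
    by_cases hall : ∀ s : ℝ, 0 ≤ s → s ≤ t → x s ≠ 0
    · have := hkey t ht hall
      linarith
    · push_neg at hall
      obtain ⟨s, hs0, hst, hszero⟩ := hall
      have : ‖x t‖ ≤ ‖x s‖ := hnormanti s t hs0 hst
      rw [hszero, norm_zero] at this
      have hxt : x t = 0 := by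
        rw [← norm_le_zero_iff]; exact this
      rw [hxt, norm_zero, Real.zero_rpow (by positivity : 2 * μ ≠ 0)]
      exact hrhs
  · intro t hT
    have ht0 : 0 ≤ t := le_trans (by positivity) hT
    by_contra hne
    have hall : ∀ s : ℝ, 0 ≤ s → s ≤ t → x s ≠ 0 := by
      intro s hs0 hst hz
      apply hne
      have : ‖x t‖ ≤ ‖x s‖ := hnormanti s t hs0 hst
      rw [hz, norm_zero] at this
      rw [← norm_le_zero_iff]; exact this
    have h1 := hkey t ht0 hall
    have h2 : ‖x 0‖ ^ (2 * μ) ≤ K * t := by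
      rw [div_le_iff₀ hKpos] at hT
      linarith [hT]
    have h3 : 0 < ‖x t‖ ^ (2 * μ) :=
      Real.rpow_pos_of_pos (norm_pos_iff.mpr hne) _
    linarith
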